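/- Closed-form expected return for the anti-periodic qubit model: let N ≥ 1 and x₊, x₋ ∈ ℝ. Define the step weight q(true,true) = 1−x₊, q(true,false) = x₊, q(false,true) = x₋, q(false,false) = 1−x₋. Then Σ over all binary trajectories ψ : Fin (N+1) → Bool with ψ(0) = true and ψ(N) = false of [(p(ψ)·x₊ − 1 − (N−p(ψ))·x₋) · ∏_{i<N} q(ψ(i), ψ(i+1))] equals Σ_{p=1}^{N} Σ_{c=1}^{min(p, N+1−p)} C(p−1, c−1)·C(N−p, c−1)·(p·x₊ − 1 − (N−p)·x₋)·x₊^c (1−x₊)^{p−c} x₋^{c−1} (1−x₋)^{N−p−c+1}. -/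

import Mathlib

open scoped BigOperators

/-- Step weight of the two-level model: `q(true,true) = 1−x₊`, `q(true,false) = x₊`,
`q(false,true) = x₋`, `q(false,false) = 1−x₋`. -/
noncomputable def qubitStep (xp xm : ℝ) : Bool → Bool → ℝ
  | true, true => 1 - xp
  | true, false => xp
  | false, true => xm
  | false, false => 1 - xm

/-- number of `true`s in a trajectory -/
def pcnt {n : ℕ} (ψ : Fin (n+1) → Bool) : ℕ :=
  (Finset.univ.filter (fun i : Fin (n+1) => ψ i = true)).card

/-- number of descents (true→false steps) -/
def dcnt {n : ℕ} (ψ : Fin (n+1) → Bool) : ℕ :=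
  (Finset.univ.filter (fun i : Fin n => ψ i.castSucc = true ∧ ψ i.succ = false)).card

def Fc (n p c : ℕ) : ℕ :=
  (Finset.univ.filter (fun ψ : Fin (n+1) → Bool =>
    ψ 0 = true ∧ ψ (Fin.last n) = false ∧ pcnt ψ = p ∧ dcnt ψ = c)).card

def Gc (n p c : ℕ) : ℕ :=
  (Finset.univ.filter (fun ψ : Fin (n+1) → Bool =>
    ψ 0 = true ∧ ψ (Fin.last n) = true ∧ pcnt ψ = p ∧ dcnt ψ = c)).card

def fB (n p c : ℕ) : ℕ :=
  if 1 ≤ c ∧ c ≤ p ∧ p + c ≤ n + 1 then Nat.choose (p-1) (c-1) * Nat.choose (n-p) (c-1) else 0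

def gB (n p c : ℕ) : ℕ :=
  if c = 0 then (if p = n + 1 then 1 else 0)
  else if c + 1 ≤ p ∧ p + c ≤ n + 1 then Nat.choose (p-1) c * Nat.choose (n-p) (c-1) else 0

lemma snoc_zero'' {n : ℕ} (φ : Fin (n+1) → Bool) (b : Bool) : (Fin.snoc φ b : Fin (n+2) → Bool) 0 = φ 0 := by
  have : (0 : Fin (n+2)) = Fin.castSucc 0 := rfl
  rw [this, Fin.snoc_castSucc]

lemma pcnt_snoc {n : ℕ} (φ : Fin (n+1) → Bool) (b : Bool) :
    pcnt (Fin.snoc φ b) = pcnt φ + (if b = true then 1 else 0) := by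
  unfold pcnt
  rw [Finset.card_filter, Finset.card_filter, Fin.sum_univ_castSucc]
  simp [Fin.snoc_castSucc, Fin.snoc_last]

lemma dcnt_snoc {n : ℕ} (φ : Fin (n+1) → Bool) (b : Bool) :
    dcnt (Fin.snoc φ b) = dcnt φ + (if φ (Fin.last n) = true ∧ b = false then 1 else 0) := by
  unfold dcnt
  rw [Finset.card_filter, Finset.card_filter, Fin.sum_univ_castSucc]
  simp [Fin.succ_castSucc, Fin.snoc_castSucc, Fin.succ_last, Fin.snoc_last, -Fin.castSucc_succ]

lemma Fc_zero (p c : ℕ) : Fc 0 p c = 0 := by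
  unfold Fc
  rw [Finset.card_eq_zero, Finset.filter_eq_empty_iff]
  intro ψ _
  rintro ⟨h0, h1, -⟩
  rw [show Fin.last 0 = 0 from rfl, h0] at h1
  exact absurd h1 (by simp)

lemma Gc_zero (p c : ℕ) : Gc 0 p c = if p = 1 ∧ c = 0 then 1 else 0 := by
  unfold Gc
  rw [Finset.card_filter,
    ← Fintype.sum_equiv (Equiv.funUnique (Fin 1) Bool).symm _ _ (fun x => rfl),
    Fintype.sum_bool]
  have h1 : pcnt (uniqueElim true : Fin 1 → Bool) = 1 := by decide
  have h2 : dcnt (uniqueElim true : Fin 1 → Bool) = 0 := by decide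
  simp only [Equiv.funUnique_symm_apply, Function.const]
  norm_num [h1, h2]
  split_ifs <;> omega

lemma sum_snoc_split {n : ℕ} (P : (Fin (n+2) → Bool) → Prop) [DecidablePred P] :
    ((Finset.univ.filter P).card)
      = ∑ φ : Fin (n+1) → Bool, ((if P (Fin.snoc φ true) then 1 else 0)
          + (if P (Fin.snoc φ false) then 1 else 0)) := by
  rw [Finset.card_filter,
    ← Fintype.sum_equiv (Fin.snocEquiv (fun _ => Bool)) _ _ (fun x => rfl),
    Fintype.sum_prod_type, Fintype.sum_bool, ← Finset.sum_add_distrib]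
  rfl

lemma Fc_succ (n p c : ℕ) : Fc (n+1) p (c+1) = Fc n p (c+1) + Gc n p c := by
  unfold Fc Gc
  rw [sum_snoc_split, Finset.card_filter, Finset.card_filter, ← Finset.sum_add_distrib]
  apply Finset.sum_congr rfl
  intro φ _
  rw [pcnt_snoc, pcnt_snoc, dcnt_snoc, dcnt_snoc, snoc_zero'', snoc_zero'', Fin.snoc_last,
    Fin.snoc_last]
  cases hl : φ (Fin.last n) <;> cases h0 : φ 0 <;> simp [hl, h0] <;> split_ifs <;> omega

lemma Fc_zero_c (n p : ℕ) : Fc (n+1) p 0 = Fc n p 0 := by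
  unfold Fc
  rw [sum_snoc_split, Finset.card_filter]
  apply Finset.sum_congr rfl
  intro φ _
  rw [pcnt_snoc, pcnt_snoc, dcnt_snoc, dcnt_snoc, snoc_zero'', snoc_zero'', Fin.snoc_last,
    Fin.snoc_last]
  cases hl : φ (Fin.last n) <;> cases h0 : φ 0 <;> simp [hl, h0] <;> split_ifs <;> omega

lemma Gc_succ (n p c : ℕ) : Gc (n+1) (p+1) c = Gc n p c + Fc n p c := by
  unfold Fc Gc
  rw [sum_snoc_split, Finset.card_filter, Finset.card_filter, ← Finset.sum_add_distrib]
  apply Finset.sum_congr rfl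
  intro φ _
  rw [pcnt_snoc, pcnt_snoc, dcnt_snoc, dcnt_snoc, snoc_zero'', snoc_zero'', Fin.snoc_last,
    Fin.snoc_last]
  cases hl : φ (Fin.last n) <;> cases h0 : φ 0 <;> simp [hl, h0] <;> split_ifs <;> omega

lemma Gc_zero_p (n c : ℕ) : Gc (n+1) 0 c = 0 := by
  unfold Gc
  rw [sum_snoc_split]
  apply Finset.sum_eq_zero
  intro φ _
  rw [pcnt_snoc, pcnt_snoc, snoc_zero'', snoc_zero'', Fin.snoc_last, Fin.snoc_last]
  cases h0 : φ 0 <;> simp [h0] <;> split_ifs <;> omega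

lemma fB_succ (n p c : ℕ) : fB (n+1) p (c+1) = fB n p (c+1) + gB n p c := by
  unfold fB gB
  rcases c with _ | k
  · norm_num
    split_ifs <;> omega
  · rw [if_neg (by omega : ¬ (k+1 = 0))]
    simp only [Nat.add_sub_cancel]
    by_cases h1 : k + 2 ≤ p
    · by_cases h2 : p + (k + 2) ≤ n + 1
      · have hs : n + 1 - p = (n - p) + 1 := by omega
        rw [if_pos (by omega), if_pos (by omega), if_pos (by omega), hs,
          Nat.choose_succ_succ, Nat.mul_add]
        simp only [Nat.succ_eq_add_one]
        omega
      · by_cases h3 : p + (k + 2) = n + 2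
        · have hs : n + 1 - p = k + 1 := by omega
          have hs2 : n - p = k := by omega
          rw [if_pos (by omega), if_neg (by omega), if_pos (by omega), hs, hs2,
            Nat.choose_self, Nat.choose_self]
          omega
        · rw [if_neg (by omega), if_neg (by omega), if_neg (by omega)]
    · rw [if_neg (by omega), if_neg (by omega), if_neg (by omega)]

lemma gB_succ (n p c : ℕ) : gB (n+1) (p+1) c = gB n p c + fB n p c := by
  unfold fB gB
  rcases c with _ | k
  · simp only [if_pos rfl, if_neg (by omega : ¬ (1:ℕ) ≤ 0)]
    split_ifs <;> omega
  · rw [if_neg (by omega : ¬ (k+1 = 0)), if_neg (by omega : ¬ (k+1 = 0))]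
    simp only [Nat.add_sub_cancel]
    by_cases h1 : k + 1 ≤ p
    · by_cases h2 : p + (k + 1) ≤ n + 1
      · have hs : n + 1 - (p + 1) = n - p := by omega
        rw [if_pos (by omega), hs]
        by_cases h3 : k + 2 ≤ p
        · rw [if_pos (by omega), if_pos (by omega)]
          rw [show Nat.choose p (k+1) = Nat.choose (p-1) k + Nat.choose (p-1) (k+1) by
            conv_lhs => rw [show p = (p - 1) + 1 by omega]
            rw [Nat.choose_succ_succ]]
          rw [Nat.add_mul]
          omega
        · have hpk : p = k + 1 := by omega
          rw [if_neg (by omega), if_pos (by omega), hpk]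
          simp [Nat.choose_self, Nat.choose_succ_self]
      · rw [if_neg (by omega), if_neg (by omega), if_neg (by omega)]
    · rw [if_neg (by omega), if_neg (by omega), if_neg (by omega)]

lemma FG_eq (n : ℕ) : (∀ p c, Fc n p c = fB n p c) ∧ (∀ p c, Gc n p c = gB n p c) := by
  induction n with
  | zero =>
    constructor
    · intro p c
      rw [Fc_zero]
      unfold fB
      split_ifs with h
      · omega
      · rfl
    · intro p c
      rw [Gc_zero]
      unfold gB
      split_ifs <;> omega
  | succ n ih =>
    obtain ⟨ihF, ihG⟩ := ih
    constructor
    · intro p c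
      rcases c with _ | c
      · rw [Fc_zero_c, ihF]
        unfold fB
        split_ifs <;> omega
      · rw [Fc_succ, ihF, ihG, fB_succ]
    · intro p c
      rcases p with _ | p
      · rw [Gc_zero_p]
        unfold gB
        split_ifs <;> first | omega | simp_all
      · rw [Gc_succ, ihF, ihG, gB_succ]

lemma traj_counts {N : ℕ} (xp xm : ℝ) (ψ : Fin (N+1) → Bool) (h0 : ψ 0 = true)
    (hN : ψ (Fin.last N) = false) :
    1 ≤ dcnt ψ ∧ dcnt ψ ≤ pcnt ψ ∧ pcnt ψ + dcnt ψ ≤ N + 1 ∧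
    (∏ i : Fin N, qubitStep xp xm (ψ i.castSucc) (ψ i.succ)) =
      xp ^ dcnt ψ * (1-xp) ^ (pcnt ψ - dcnt ψ) * xm ^ (dcnt ψ - 1)
        * (1-xm) ^ (N + 1 - pcnt ψ - dcnt ψ) := by
  classical
  set aTT := (Finset.univ.filter (fun i : Fin N => ψ i.castSucc = true ∧ ψ i.succ = true)).card with haTT
  set aFT := (Finset.univ.filter (fun i : Fin N => ψ i.castSucc = false ∧ ψ i.succ = true)).card with haFT
  set aFF := (Finset.univ.filter (fun i : Fin N => ψ i.castSucc = false ∧ ψ i.succ = false)).card with haFF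
  have hpcnt0 : pcnt ψ = 1 + ∑ i : Fin N, (if ψ i.succ = true then 1 else 0) := by
    unfold pcnt
    rw [Finset.card_filter, Fin.sum_univ_succ, h0]
    simp
  have hpcnt1 : pcnt ψ = ∑ i : Fin N, (if ψ i.castSucc = true then 1 else 0) := by
    unfold pcnt
    rw [Finset.card_filter, Fin.sum_univ_castSucc, hN]
    simp
  have e1 : aTT + dcnt ψ = ∑ i : Fin N, (if ψ i.castSucc = true then 1 else 0) := by
    unfold dcnt
    rw [haTT, Finset.card_filter, Finset.card_filter, ← Finset.sum_add_distrib]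
    apply Finset.sum_congr rfl
    intro i _
    cases h1 : ψ i.castSucc <;> cases h2 : ψ i.succ <;> simp [h1, h2]
  have e2 : aTT + aFT = ∑ i : Fin N, (if ψ i.succ = true then 1 else 0) := by
    rw [haTT, haFT, Finset.card_filter, Finset.card_filter, ← Finset.sum_add_distrib]
    apply Finset.sum_congr rfl
    intro i _
    cases h1 : ψ i.castSucc <;> cases h2 : ψ i.succ <;> simp [h1, h2]
  have e3 : (∑ i : Fin N, (if ψ i.castSucc = true then 1 else 0)) + (aFT + aFF) = N := by
    rw [haFT, haFF, Finset.card_filter, Finset.card_filter, ← Finset.sum_add_distrib,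
      ← Finset.sum_add_distrib]
    calc _ = ∑ _i : Fin N, 1 := Finset.sum_congr rfl (fun i _ => by
            cases h1 : ψ i.castSucc <;> cases h2 : ψ i.succ <;> simp [h1, h2])
      _ = N := by simp
  refine ⟨by omega, by omega, by omega, ?_⟩
  have key : ∀ (P : Fin N → Prop) (_ : DecidablePred P) (v : ℝ),
      (∀ i, P i → qubitStep xp xm (ψ i.castSucc) (ψ i.succ) = v) →
      (∏ i ∈ Finset.univ.filter P, qubitStep xp xm (ψ i.castSucc) (ψ i.succ))
        = v ^ (Finset.univ.filter P).card := by
    intro P _ v hv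
    rw [Finset.prod_congr rfl (fun i hi => hv i (Finset.mem_filter.mp hi).2), Finset.prod_const]
  rw [← Finset.prod_filter_mul_prod_filter_not Finset.univ
        (fun i : Fin N => ψ i.castSucc = true),
      ← Finset.prod_filter_mul_prod_filter_not (Finset.univ.filter _)
        (fun i : Fin N => ψ i.succ = true),
      ← Finset.prod_filter_mul_prod_filter_not (Finset.univ.filter _)
        (fun i : Fin N => ψ i.succ = true)]
  simp only [Finset.filter_filter, Bool.not_eq_true]
  rw [key _ _ (1 - xp) (fun i hi => by rw [hi.1, hi.2]; rfl),
      key _ _ xp (fun i hi => by rw [hi.1, hi.2]; rfl),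
      key _ _ xm (fun i hi => by rw [hi.1, hi.2]; rfl),
      key _ _ (1 - xm) (fun i hi => by rw [hi.1, hi.2]; rfl)]
  have hd : (Finset.univ.filter (fun i : Fin N => ψ i.castSucc = true ∧ ψ i.succ = false)).card = dcnt ψ := rfl
  rw [hd, ← haTT, ← haFT, ← haFF]
  rw [show aTT = pcnt ψ - dcnt ψ by omega, show aFT = dcnt ψ - 1 by omega,
    show aFF = N + 1 - pcnt ψ - dcnt ψ by omega]
  ring

/-- Closed-form expected return for the anti-periodic qubit model: the brute-force sum over
all binary trajectories starting at `true` and ending at `false` equals the combinatorial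
double sum. -/
theorem antiperiodic_expected_return (N : ℕ) (hN : 1 ≤ N) (xp xm : ℝ) :
    ∑ ψ ∈ Finset.univ.filter (fun ψ : Fin (N + 1) → Bool =>
        ψ 0 = true ∧ ψ (Fin.last N) = false),
      (((Finset.univ.filter (fun i : Fin (N + 1) => ψ i = true)).card : ℝ) * xp - 1
          - ((N : ℝ)
              - ((Finset.univ.filter (fun i : Fin (N + 1) => ψ i = true)).card : ℝ)) * xm)
        * ∏ i : Fin N, qubitStep xp xm (ψ i.castSucc) (ψ i.succ)
    = ∑ p ∈ Finset.Icc 1 N, ∑ c ∈ Finset.Icc 1 (min p (N + 1 - p)),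
        ((Nat.choose (p - 1) (c - 1) * Nat.choose (N - p) (c - 1) : ℕ) : ℝ)
          * ((p : ℝ) * xp - 1 - ((N : ℝ) - (p : ℝ)) * xm)
          * xp ^ c * (1 - xp) ^ (p - c) * xm ^ (c - 1) * (1 - xm) ^ (N + 1 - p - c) := by
  classical
  have hmaps : ∀ ψ ∈ Finset.univ.filter (fun ψ : Fin (N + 1) → Bool =>
      ψ 0 = true ∧ ψ (Fin.last N) = false),
      (fun ψ : Fin (N+1) → Bool => (pcnt ψ, dcnt ψ)) ψ ∈ Finset.Icc 1 N ×ˢ Finset.Icc 1 N := by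
    intro ψ hψ
    obtain ⟨h0, hlast⟩ := (Finset.mem_filter.mp hψ).2
    obtain ⟨c1, c2, c3, -⟩ := traj_counts xp xm ψ h0 hlast
    simp only [Finset.mem_product, Finset.mem_Icc]
    omega
  rw [← Finset.sum_fiberwise_of_maps_to hmaps, Finset.sum_product]
  apply Finset.sum_congr rfl
  intro p hp
  have hpN : 1 ≤ p ∧ p ≤ N := Finset.mem_Icc.mp hp
  have hinner : ∀ c ∈ Finset.Icc 1 N,
      (∑ ψ ∈ (Finset.univ.filter (fun ψ : Fin (N + 1) → Bool =>
          ψ 0 = true ∧ ψ (Fin.last N) = false)).filter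
          (fun ψ => (fun ψ : Fin (N+1) → Bool => (pcnt ψ, dcnt ψ)) ψ = (p, c)),
        (((Finset.univ.filter (fun i : Fin (N + 1) => ψ i = true)).card : ℝ) * xp - 1
          - ((N : ℝ)
              - ((Finset.univ.filter (fun i : Fin (N + 1) => ψ i = true)).card : ℝ)) * xm)
        * ∏ i : Fin N, qubitStep xp xm (ψ i.castSucc) (ψ i.succ))
      = (fB N p c : ℝ) * (((p : ℝ) * xp - 1 - ((N : ℝ) - (p : ℝ)) * xm)
          * (xp ^ c * (1 - xp) ^ (p - c) * xm ^ (c - 1) * (1 - xm) ^ (N + 1 - p - c))) := by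
    intro c _
    have hcard : ((Finset.univ.filter (fun ψ : Fin (N + 1) → Bool =>
        ψ 0 = true ∧ ψ (Fin.last N) = false)).filter
        (fun ψ => (fun ψ : Fin (N+1) → Bool => (pcnt ψ, dcnt ψ)) ψ = (p, c))).card
        = Fc N p c := by
      rw [Finset.filter_filter]
      unfold Fc
      congr 1
      apply Finset.filter_congr
      intro ψ _
      simp [Prod.ext_iff, and_assoc]
    rw [Finset.sum_congr rfl (fun ψ hψ => ?_), Finset.sum_const, hcard,
      (FG_eq N).1 p c, nsmul_eq_mul]
    obtain ⟨hmem, hpc⟩ := Finset.mem_filter.mp hψ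
    obtain ⟨h0, hlast⟩ := (Finset.mem_filter.mp hmem).2
    have hpp : pcnt ψ = p := congrArg Prod.fst hpc
    have hcc : dcnt ψ = c := congrArg Prod.snd hpc
    obtain ⟨-, -, -, hprod⟩ := traj_counts xp xm ψ h0 hlast
    have hcd : (Finset.univ.filter (fun i : Fin (N + 1) => ψ i = true)).card = p := hpp
    rw [hcd, hprod, hpp, hcc]
  rw [Finset.sum_congr rfl hinner]
  rw [← Finset.sum_subset (Finset.Icc_subset_Icc_right (by omega : min p (N + 1 - p) ≤ N))
    (fun c hc hc' => ?_)]
  · apply Finset.sum_congr rfl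
    intro c hc
    have hc2 := Finset.mem_Icc.mp hc
    have hguard : 1 ≤ c ∧ c ≤ p ∧ p + c ≤ N + 1 := by
      have := le_min_iff.mp hc2.2
      omega
    rw [show fB N p c = Nat.choose (p-1) (c-1) * Nat.choose (N-p) (c-1) from by
      unfold fB; rw [if_pos hguard]]
    push_cast
    ring
  · have hc2 := Finset.mem_Icc.mp hc
    have : ¬ (c ≤ min p (N + 1 - p)) := fun h => hc' (Finset.mem_Icc.mpr ⟨hc2.1, h⟩)
    have hng : ¬ (1 ≤ c ∧ c ≤ p ∧ p + c ≤ N + 1) := by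
      intro h
      exact this (le_min_iff.mpr ⟨h.2.1, by omega⟩)
    rw [show fB N p c = 0 from by unfold fB; rw [if_neg hng]]
    simp
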